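/- (Lennard-Jones potential, n = 12, m = 6) Let σ > 0 and T > 0. Then B(T) = -2π ∫₀^∞ [exp(-(1/T)((σ/r)^{12} - (σ/r)^6)) - 1] r² dr equals -(πσ³/(6·T^{1/4})) · [ Γ(-1/4) · ₁F₁(-1/4; 1/2; 1/(4T)) + (Γ(1/4)/√T) · ₁F₁(1/4; 3/2; 1/(4T)) ]. -/

import Mathlib

open Real MeasureTheory

/-- The Pochhammer symbol (rising factorial) `(a)_k = a(a+1)⋯(a+k-1)`. -/
noncomputable def risingFactorial (a : ℝ) (k : ℕ) : ℝ :=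
  ∏ i ∈ Finset.range k, (a + i)

/-- The Kummer confluent hypergeometric function
`₁F₁(a;b;x) = ∑_{k=0}^∞ ((a)_k/(b)_k) xᵏ/k!`. -/
noncomputable def kummer (a b x : ℝ) : ℝ :=
  ∑' k : ℕ, (risingFactorial a k / risingFactorial b k) * x ^ k / (k.factorial : ℝ)

open Set Filter Topology

section LJaux

lemma risingFactorial_zero' (a : ℝ) : risingFactorial a 0 = 1 := Finset.prod_range_zero _

lemma risingFactorial_succ' (a : ℝ) (j : ℕ) :
    risingFactorial a (j + 1) = risingFactorial a j * (a + j) := Finset.prod_range_succ _ _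

lemma risingFactorial_pos' {a : ℝ} (ha : 0 < a) (j : ℕ) : 0 < risingFactorial a j :=
  Finset.prod_pos fun i _ => by positivity

lemma Gamma_rf (a : ℝ) (h : ∀ i : ℕ, a + (i : ℝ) ≠ 0) : ∀ j : ℕ,
    Real.Gamma (a + j) = Real.Gamma a * risingFactorial a j
  | 0 => by simp [risingFactorial_zero']
  | (j + 1) => by
    have h1 : a + ((j + 1 : ℕ) : ℝ) = (a + j) + 1 := by push_cast; ring
    rw [h1, Real.Gamma_add_one (h j), Gamma_rf a h j, risingFactorial_succ']
    ring

lemma fact_even (j : ℕ) : (((2 * j).factorial : ℕ) : ℝ)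
    = 4 ^ j * (j.factorial : ℝ) * risingFactorial (1/2) j := by
  induction j with
  | zero => simp [risingFactorial_zero']
  | succ j ih =>
    rw [show 2 * (j + 1) = (2 * j + 1) + 1 from by ring, Nat.factorial_succ,
      Nat.factorial_succ (2 * j), Nat.factorial_succ j, risingFactorial_succ']
    push_cast
    rw [ih]
    ring

lemma fact_odd (j : ℕ) : (((2 * j + 1).factorial : ℕ) : ℝ)
    = 4 ^ j * (j.factorial : ℝ) * risingFactorial (3/2) j := by
  induction j with
  | zero => simp [risingFactorial_zero']
  | succ j ih =>
    rw [show 2 * (j + 1) + 1 = ((2 * j + 1) + 1) + 1 from by ring, Nat.factorial_succ,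
      Nat.factorial_succ (2 * j + 1), Nat.factorial_succ j, risingFactorial_succ']
    push_cast
    rw [ih]
    ring

lemma Gamma_neg_quarter : Real.Gamma (-(1/4) : ℝ) = -4 * Real.Gamma (3/4) := by
  have h := Real.Gamma_add_one (s := (-(1/4) : ℝ)) (by norm_num)
  rw [show (-(1/4 : ℝ)) + 1 = 3/4 by norm_num] at h
  linarith

lemma exp_tsum (y : ℝ) : Real.exp y = ∑' n : ℕ, y ^ n / n.factorial := by
  rw [Real.exp_eq_exp_ℝ, NormedSpace.exp_eq_tsum_div]

lemma contOn_rpow (p : ℝ) : ContinuousOn (fun x : ℝ => x ^ p) (Ioi 0) := fun x hx =>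
  (Real.continuousAt_rpow_const x p (Or.inl (ne_of_gt hx))).continuousWithinAt

lemma neg_quarter_ne (i : ℕ) : (-(1/4) : ℝ) + (i : ℝ) ≠ 0 := by
  rcases Nat.eq_zero_or_pos i with h | h
  · subst h; norm_num
  · have : (1:ℝ) ≤ i := by exact_mod_cast h
    have : (0:ℝ) < -(1/4) + i := by linarith
    exact this.ne'

lemma pos_quarter_ne (i : ℕ) : ((1/4) : ℝ) + (i : ℝ) ≠ 0 := by
  have : (0:ℝ) ≤ i := Nat.cast_nonneg i
  have : (0:ℝ) < 1/4 + i := by linarith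
  exact this.ne'

end LJaux

section LJint

lemma intA_val {c : ℝ} (hc : 0 < c) {e : ℝ} (he : e < -1) :
    ∫ x in Ioi (0:ℝ), Real.exp (-(c * x ^ (-12 : ℝ))) * x ^ e
      = (1/12) * c ^ ((e + 1) / 12) * Real.Gamma (-((e + 1) / 12)) := by
  set a : ℝ := -((e + 1) / 12) with ha_def
  have ha : 0 < a := by rw [ha_def]; linarith
  have key := MeasureTheory.integral_comp_rpow_Ioi
      (fun y => (1/12 : ℝ) * (y ^ (a - 1) * Real.exp (-(c * y)))) (p := -12) (by norm_num)
  have h1 : ∫ x in Ioi (0:ℝ), Real.exp (-(c * x ^ (-12 : ℝ))) * x ^ e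
      = ∫ x in Ioi (0:ℝ), (|(-12 : ℝ)| * x ^ ((-12 : ℝ) - 1)) •
          ((1/12 : ℝ) * ((x ^ (-12 : ℝ)) ^ (a - 1) * Real.exp (-(c * x ^ (-12 : ℝ))))) := by
    refine setIntegral_congr_fun measurableSet_Ioi fun x hx => ?_
    have hx0 : (0:ℝ) < x := hx
    have h2 : (x ^ (-12 : ℝ)) ^ (a - 1) = x ^ ((-12) * (a - 1)) := (Real.rpow_mul hx0.le _ _).symm
    have h3 : x ^ ((-12 : ℝ) - 1) * x ^ ((-12 : ℝ) * (a - 1)) = x ^ e := by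
      rw [← Real.rpow_add hx0]
      congr 1
      rw [ha_def]; ring
    rw [smul_eq_mul, h2, (by norm_num : |(-12 : ℝ)| = 12), ← h3]
    ring
  rw [h1, key, MeasureTheory.integral_const_mul, Real.integral_rpow_mul_exp_neg_mul_Ioi ha hc,
    one_div c, Real.inv_rpow hc.le, ← Real.rpow_neg hc.le]
  rw [ha_def]
  ring_nf

lemma intA_int {c : ℝ} (hc : 0 < c) {e : ℝ} (he : e < -1) :
    IntegrableOn (fun x : ℝ => Real.exp (-(c * x ^ (-12 : ℝ))) * x ^ e) (Ioi 0) := by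
  have hcont : ContinuousOn (fun x : ℝ => Real.exp (-(c * x ^ (-12 : ℝ))) * x ^ e) (Ioi 0) := by
    exact (Real.continuous_exp.comp_continuousOn
      ((continuousOn_const.mul (contOn_rpow (-12))).neg)).mul (contOn_rpow e)
  rw [← Set.Ioc_union_Ioi_eq_Ioi (zero_le_one : (0:ℝ) ≤ 1)]
  refine IntegrableOn.union ?_ ?_
  · set n : ℕ := ⌈-((e + 1) / 12)⌉₊ + 1 with hn_def
    have hna : -((e + 1) / 12) ≤ (⌈-((e + 1) / 12)⌉₊ : ℝ) := Nat.le_ceil _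
    refine Integrable.mono' (g := fun _ : ℝ => (n.factorial : ℝ) / c ^ n)
      (integrableOn_const measure_Ioc_lt_top.ne)
      ((hcont.mono Ioc_subset_Ioi_self).aestronglyMeasurable measurableSet_Ioc) ?_
    rw [ae_restrict_iff' measurableSet_Ioc]
    refine ae_of_all _ fun x hx => ?_
    have hx0 : (0:ℝ) < x := hx.1
    have hx1 : x ≤ 1 := hx.2
    have ht0 : (0:ℝ) < c * x ^ (-12 : ℝ) := by positivity
    have hfac : (0:ℝ) < (n.factorial : ℝ) := by exact_mod_cast n.factorial_pos
    have hexp : Real.exp (-(c * x ^ (-12 : ℝ))) ≤ (n.factorial : ℝ) / (c * x ^ (-12:ℝ)) ^ n := by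
      have h2 : (c * x ^ (-12:ℝ)) ^ n / (n.factorial : ℝ) ≤ Real.exp (c * x ^ (-12:ℝ)) :=
        Real.pow_div_factorial_le_exp (x := c * x ^ (-12:ℝ)) ht0.le n
      rw [Real.exp_neg]
      calc (Real.exp (c * x ^ (-12:ℝ)))⁻¹ ≤ ((c * x ^ (-12:ℝ)) ^ n / (n.factorial : ℝ))⁻¹ :=
            inv_anti₀ (by positivity) h2
        _ = (n.factorial : ℝ) / (c * x ^ (-12:ℝ)) ^ n := inv_div _ _
    have hxn : (x ^ (-12:ℝ)) ^ n = x ^ ((-12:ℝ) * n) := by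
      rw [← Real.rpow_natCast (x ^ (-12:ℝ)) n, ← Real.rpow_mul hx0.le]
    have h12n : (11:ℝ) ≤ e + 12 * n := by
      have : ((n:ℝ)) = (⌈-((e + 1) / 12)⌉₊ : ℝ) + 1 := by rw [hn_def]; push_cast; ring
      rw [this]; nlinarith
    have key : (n.factorial : ℝ) / (c * x ^ (-12:ℝ)) ^ n * x ^ e
        = (n.factorial : ℝ) / c ^ n * x ^ (e + -((-12:ℝ) * n)) := by
      rw [mul_pow, hxn]
      calc (n.factorial : ℝ) / (c ^ n * x ^ ((-12:ℝ) * n)) * x ^ e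
          = (n.factorial : ℝ) / c ^ n * (x ^ e * (x ^ ((-12:ℝ) * n))⁻¹) := by ring
        _ = (n.factorial : ℝ) / c ^ n * (x ^ e * x ^ (-((-12:ℝ) * n))) := by
            rw [← Real.rpow_neg hx0.le]
        _ = (n.factorial : ℝ) / c ^ n * x ^ (e + -((-12:ℝ) * n)) := by
            rw [← Real.rpow_add hx0]
    rw [Real.norm_eq_abs, abs_of_nonneg (by positivity)]
    calc Real.exp (-(c * x ^ (-12 : ℝ))) * x ^ e
        ≤ (n.factorial : ℝ) / (c * x ^ (-12:ℝ)) ^ n * x ^ e :=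
          mul_le_mul_of_nonneg_right hexp (by positivity)
      _ = (n.factorial : ℝ) / c ^ n * x ^ (e + -((-12:ℝ) * n)) := key
      _ ≤ (n.factorial : ℝ) / c ^ n * 1 := by
          apply mul_le_mul_of_nonneg_left _ (by positivity)
          apply Real.rpow_le_one hx0.le hx1
          linarith
      _ = (n.factorial : ℝ) / c ^ n := mul_one _
  · refine Integrable.mono' (g := fun x : ℝ => x ^ e)
      (integrableOn_Ioi_rpow_of_lt he one_pos)
      ((hcont.mono (Ioi_subset_Ioi zero_le_one)).aestronglyMeasurable measurableSet_Ioi) ?_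
    rw [ae_restrict_iff' measurableSet_Ioi]
    refine ae_of_all _ fun x hx => ?_
    have hx0 : (0:ℝ) < x := lt_trans one_pos hx
    have h1 : Real.exp (-(c * x ^ (-12 : ℝ))) ≤ 1 := by
      rw [Real.exp_le_one_iff]
      exact neg_nonpos.mpr (by positivity)
    rw [Real.norm_eq_abs, abs_of_nonneg (by positivity)]
    calc Real.exp (-(c * x ^ (-12 : ℝ))) * x ^ e ≤ 1 * x ^ e :=
          mul_le_mul_of_nonneg_right h1 (by positivity)
      _ = x ^ e := one_mul _

lemma hH_int : IntegrableOn (fun y : ℝ => (Real.exp (-y) - 1) * y ^ (-(5/4) : ℝ)) (Ioi 0) := by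
  have hcont : ContinuousOn (fun y : ℝ => (Real.exp (-y) - 1) * y ^ (-(5/4) : ℝ)) (Ioi 0) :=
    ((Real.continuous_exp.comp continuous_neg).continuousOn.sub continuousOn_const).mul
      (contOn_rpow _)
  rw [← Set.Ioc_union_Ioi_eq_Ioi (zero_le_one : (0:ℝ) ≤ 1)]
  refine IntegrableOn.union ?_ ?_
  · refine Integrable.mono' (g := fun y : ℝ => y ^ (-(1/4) : ℝ))
      ((intervalIntegral.intervalIntegrable_rpow' (by norm_num)).1)
      ((hcont.mono Ioc_subset_Ioi_self).aestronglyMeasurable measurableSet_Ioc) ?_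
    rw [ae_restrict_iff' measurableSet_Ioc]
    refine ae_of_all _ fun y hy => ?_
    have hy0 : (0:ℝ) < y := hy.1
    have h1 : |Real.exp (-y) - 1| ≤ y := by
      rw [abs_of_nonpos (by simp [Real.exp_le_one_iff]; linarith)]
      have := Real.add_one_le_exp (-y)
      linarith
    rw [Real.norm_eq_abs, abs_mul, abs_of_nonneg (Real.rpow_nonneg hy0.le _)]
    calc |Real.exp (-y) - 1| * y ^ (-(5/4) : ℝ) ≤ y * y ^ (-(5/4) : ℝ) :=
          mul_le_mul_of_nonneg_right h1 (Real.rpow_nonneg hy0.le _)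
      _ = y ^ (-(1/4) : ℝ) := by
          have hh : y * y ^ (-(5/4) : ℝ) = y ^ ((1:ℝ) + -(5/4)) := by
            rw [Real.rpow_add hy0, Real.rpow_one]
          rw [hh]
          norm_num
  · refine Integrable.mono' (g := fun y : ℝ => y ^ (-(5/4) : ℝ))
      (integrableOn_Ioi_rpow_of_lt (by norm_num) one_pos)
      ((hcont.mono (Ioi_subset_Ioi zero_le_one)).aestronglyMeasurable measurableSet_Ioi) ?_
    rw [ae_restrict_iff' measurableSet_Ioi]
    refine ae_of_all _ fun y hy => ?_
    have hy0 : (0:ℝ) < y := lt_trans one_pos hy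
    have h1 : |Real.exp (-y) - 1| ≤ 1 := by
      rw [abs_of_nonpos (by simp [Real.exp_le_one_iff]; linarith)]
      have := (Real.exp_pos (-y)).le
      linarith
    rw [Real.norm_eq_abs, abs_mul, abs_of_nonneg (Real.rpow_nonneg hy0.le _)]
    calc |Real.exp (-y) - 1| * y ^ (-(5/4) : ℝ) ≤ 1 * y ^ (-(5/4) : ℝ) :=
          mul_le_mul_of_nonneg_right h1 (Real.rpow_nonneg hy0.le _)
      _ = y ^ (-(5/4) : ℝ) := one_mul _

lemma J_val : ∫ y in Ioi (0:ℝ), (Real.exp (-y) - 1) * y ^ (-(5/4) : ℝ)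
    = -4 * Real.Gamma (3/4) := by
  set F : ℝ → ℝ := fun y => (Real.exp (-y) - 1) * (-4 * y ^ (-(1/4) : ℝ)) with hF
  set G : ℝ → ℝ := fun y => 4 * (Real.exp (-y) * y ^ ((3/4 : ℝ) - 1)) with hG
  set H : ℝ → ℝ := fun y => (Real.exp (-y) - 1) * y ^ (-(5/4) : ℝ) with hH
  have hexp54 : ((-(1/4) : ℝ) - 1) = -(5/4) := by norm_num
  have hderiv : ∀ y ∈ Ioi (0:ℝ), HasDerivAt F (G y + H y) y := by
    intro y hy
    have hy0 : (0:ℝ) < y := hy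
    have hu : HasDerivAt (fun y : ℝ => Real.exp (-y) - 1) (-Real.exp (-y)) y := by
      have := ((Real.hasDerivAt_exp (-y)).comp y (hasDerivAt_neg y)).sub_const 1
      simpa using this
    have hv : HasDerivAt (fun y : ℝ => -4 * y ^ (-(1/4) : ℝ))
        (-4 * (-(1/4) * y ^ ((-(1/4) : ℝ) - 1))) y :=
      (Real.hasDerivAt_rpow_const (Or.inl hy0.ne')).const_mul (-4)
    have := hu.mul hv
    convert this using 1
    case e'_4 => rfl
    case e'_5 => rfl
    case e'_8 => rfl
    simp only [hG, hH]
    rw [show ((3:ℝ)/4 - 1) = -(1/4) by norm_num, show ((-(1/4):ℝ) - 1) = -(5/4) by norm_num]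
    ring
  have hcont : ContinuousWithinAt F (Ici 0) 0 := by
    unfold ContinuousWithinAt
    have hF0 : F 0 = 0 := by
      simp [hF, Real.zero_rpow (by norm_num : (-(1/4):ℝ) ≠ 0)]
    rw [hF0]
    refine squeeze_zero_norm' (a := fun y : ℝ => 4 * y ^ ((3/4) : ℝ)) ?_ ?_
    · filter_upwards [self_mem_nhdsWithin] with y hy
      have hy0 : (0:ℝ) ≤ y := hy
      rcases eq_or_lt_of_le hy0 with h | h
      · simp [hF, ← h, Real.zero_rpow (by norm_num : (-(1/4):ℝ) ≠ 0),
          Real.zero_rpow (by norm_num : ((3/4):ℝ) ≠ 0)]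
      · have h1 : |Real.exp (-y) - 1| ≤ y := by
          rw [abs_of_nonpos (by simp [Real.exp_le_one_iff]; linarith)]
          have := Real.add_one_le_exp (-y)
          linarith
        rw [Real.norm_eq_abs, hF, abs_mul, abs_mul]
        rw [abs_of_nonneg (Real.rpow_nonneg hy0 _), (by norm_num : |(-4:ℝ)| = 4)]
        calc |Real.exp (-y) - 1| * (4 * y ^ (-(1/4) : ℝ))
            ≤ y * (4 * y ^ (-(1/4) : ℝ)) := by
              apply mul_le_mul_of_nonneg_right h1 (by positivity)
          _ = 4 * y ^ ((3/4) : ℝ) := by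
              rw [show ((3:ℝ)/4) = (1:ℝ) + -(1/4) by norm_num, Real.rpow_add h, Real.rpow_one]
              ring
    · have := ((Real.continuousAt_rpow_const 0 (3/4) (Or.inr (by norm_num))).continuousWithinAt
        (s := Ici (0:ℝ))).tendsto
      rw [Real.zero_rpow (by norm_num : ((3/4):ℝ) ≠ 0)] at this
      simpa using this.const_mul 4
  have htop : Tendsto F atTop (𝓝 0) := by
    have t1 : Tendsto (fun y : ℝ => Real.exp (-y) - 1) atTop (𝓝 (0 - 1)) :=
      (Real.tendsto_exp_neg_atTop_nhds_zero).sub_const 1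
    have t2 : Tendsto (fun y : ℝ => -4 * y ^ (-(1/4) : ℝ)) atTop (𝓝 (-4 * 0)) :=
      (tendsto_rpow_neg_atTop (by norm_num)).const_mul (-4)
    rw [hF, show (0:ℝ) = (0 - 1) * (-4 * 0) by norm_num]
    exact t1.mul t2
  have hGint : IntegrableOn G (Ioi 0) :=
    (Real.GammaIntegral_convergent (by norm_num : (0:ℝ) < 3/4)).const_mul 4
  have hHint : IntegrableOn H (Ioi 0) := hH_int
  have key := MeasureTheory.integral_Ioi_of_hasDerivAt_of_tendsto hcont hderiv
    (hGint.add hHint) htop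
  rw [MeasureTheory.integral_add hGint hHint] at key
  have hG_val : ∫ y in Ioi (0:ℝ), G y = 4 * Real.Gamma (3/4) := by
    rw [hG, MeasureTheory.integral_const_mul, ← Real.Gamma_eq_integral (by norm_num : (0:ℝ) < 3/4)]
  have hF0 : F 0 = 0 := by
    simp [hF, Real.zero_rpow (by norm_num : (-(1/4):ℝ) ≠ 0)]
  rw [hG_val, hF0] at key
  show ∫ y in Ioi (0:ℝ), H y = -4 * Real.Gamma (3/4)
  linarith

lemma intB_val {c : ℝ} (hc : 0 < c) :
    ∫ x in Ioi (0:ℝ), (Real.exp (-(c * x ^ (-12 : ℝ))) - 1) * x ^ 2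
      = (1/12) * c ^ ((1:ℝ)/4) * Real.Gamma (-(1/4)) := by
  have key := MeasureTheory.integral_comp_rpow_Ioi
      (fun y => (1/12 : ℝ) * ((Real.exp (-(c * y)) - 1) * y ^ (-(5/4) : ℝ)))
      (p := -12) (by norm_num)
  have h1 : ∫ x in Ioi (0:ℝ), (Real.exp (-(c * x ^ (-12 : ℝ))) - 1) * x ^ 2
      = ∫ x in Ioi (0:ℝ), (|(-12 : ℝ)| * x ^ ((-12 : ℝ) - 1)) •
          ((1/12 : ℝ) * ((Real.exp (-(c * x ^ (-12 : ℝ))) - 1) * (x ^ (-12 : ℝ)) ^ (-(5/4) : ℝ))) := by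
    refine setIntegral_congr_fun measurableSet_Ioi fun x hx => ?_
    have hx0 : (0:ℝ) < x := hx
    have h2 : (x ^ (-12 : ℝ)) ^ (-(5/4) : ℝ) = x ^ ((15 : ℝ)) := by
      rw [← Real.rpow_mul hx0.le]
      norm_num
    have h3 : x ^ ((-12 : ℝ) - 1) * x ^ ((15 : ℝ)) = x ^ 2 := by
      rw [← Real.rpow_add hx0, show ((-12 : ℝ) - 1 + 15) = ((2:ℕ) : ℝ) by norm_num,
        Real.rpow_natCast]
    rw [smul_eq_mul, h2, (by norm_num : |(-12 : ℝ)| = 12), ← h3]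
    ring
  have h4 : ∫ y in Ioi (0:ℝ), (Real.exp (-(c * y)) - 1) * y ^ (-(5/4) : ℝ)
      = c ^ ((1:ℝ)/4) * (-4 * Real.Gamma (3/4)) := by
    have key2 := MeasureTheory.integral_comp_mul_left_Ioi
      (fun y => (Real.exp (-y) - 1) * y ^ (-(5/4) : ℝ)) 0 hc
    rw [mul_zero] at key2
    have h5 : ∫ x in Ioi (0:ℝ), (fun y => (Real.exp (-y) - 1) * y ^ (-(5/4) : ℝ)) (c * x)
        = ∫ x in Ioi (0:ℝ), c ^ (-(5/4) : ℝ) * ((Real.exp (-(c * x)) - 1) * x ^ (-(5/4) : ℝ)) := by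
      refine setIntegral_congr_fun measurableSet_Ioi fun x hx => ?_
      have hx0 : (0:ℝ) < x := hx
      simp only
      rw [Real.mul_rpow hc.le hx0.le]
      ring
    rw [h5, MeasureTheory.integral_const_mul, J_val, smul_eq_mul] at key2
    have hcn : c ^ (-(5/4) : ℝ) ≠ 0 := (Real.rpow_pos_of_pos hc _).ne'
    have h6 : ∫ x in Ioi (0:ℝ), (Real.exp (-(c * x)) - 1) * x ^ (-(5/4) : ℝ)
        = (c ^ (-(5/4) : ℝ))⁻¹ * (c⁻¹ * (-4 * Real.Gamma (3/4))) := by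
      field_simp at key2 ⊢
      linarith [key2]
    rw [h6, ← Real.rpow_neg hc.le, ← Real.rpow_neg_one c, ← mul_assoc, ← Real.rpow_add hc]
    norm_num
  rw [h1, key, MeasureTheory.integral_const_mul, h4, Gamma_neg_quarter]
  ring

lemma intB_int {c : ℝ} (hc : 0 < c) :
    IntegrableOn (fun x : ℝ => (Real.exp (-(c * x ^ (-12 : ℝ))) - 1) * x ^ 2) (Ioi 0) := by
  have hcont : ContinuousOn (fun x : ℝ => (Real.exp (-(c * x ^ (-12 : ℝ))) - 1) * x ^ 2)
      (Ioi 0) := by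
    exact ((Real.continuous_exp.comp_continuousOn
      ((continuousOn_const.mul (contOn_rpow (-12))).neg)).sub continuousOn_const).mul
      (continuous_pow 2).continuousOn
  rw [← Set.Ioc_union_Ioi_eq_Ioi (zero_le_one : (0:ℝ) ≤ 1)]
  refine IntegrableOn.union ?_ ?_
  · refine Integrable.mono' (g := fun _ : ℝ => (1:ℝ))
      (integrableOn_const measure_Ioc_lt_top.ne)
      ((hcont.mono Ioc_subset_Ioi_self).aestronglyMeasurable measurableSet_Ioc) ?_
    rw [ae_restrict_iff' measurableSet_Ioc]
    refine ae_of_all _ fun x hx => ?_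
    have hx0 : (0:ℝ) < x := hx.1
    have hx1 : x ≤ 1 := hx.2
    have hE : |Real.exp (-(c * x ^ (-12 : ℝ))) - 1| ≤ 1 := by
      rw [abs_of_nonpos (by simp [Real.exp_le_one_iff]; positivity)]
      have := (Real.exp_pos (-(c * x ^ (-12 : ℝ)))).le
      linarith
    rw [Real.norm_eq_abs, abs_mul, abs_of_nonneg (sq_nonneg x)]
    calc |Real.exp (-(c * x ^ (-12 : ℝ))) - 1| * x ^ 2 ≤ 1 * x ^ 2 :=
          mul_le_mul_of_nonneg_right hE (sq_nonneg x)
      _ ≤ 1 := by rw [one_mul]; nlinarith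
  · refine Integrable.mono' (g := fun x : ℝ => c * x ^ (-10 : ℝ))
      ((integrableOn_Ioi_rpow_of_lt (by norm_num) one_pos).const_mul c)
      ((hcont.mono (Ioi_subset_Ioi zero_le_one)).aestronglyMeasurable measurableSet_Ioi) ?_
    rw [ae_restrict_iff' measurableSet_Ioi]
    refine ae_of_all _ fun x hx => ?_
    have hx0 : (0:ℝ) < x := lt_trans one_pos hx
    have hE : |Real.exp (-(c * x ^ (-12 : ℝ))) - 1| ≤ c * x ^ (-12 : ℝ) := by
      rw [abs_of_nonpos (by simp [Real.exp_le_one_iff]; positivity)]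
      have := Real.add_one_le_exp (-(c * x ^ (-12 : ℝ)))
      linarith
    rw [Real.norm_eq_abs, abs_mul, abs_of_nonneg (sq_nonneg x)]
    calc |Real.exp (-(c * x ^ (-12 : ℝ))) - 1| * x ^ 2 ≤ (c * x ^ (-12 : ℝ)) * x ^ 2 :=
          mul_le_mul_of_nonneg_right hE (sq_nonneg x)
      _ = c * x ^ (-10 : ℝ) := by
          rw [mul_assoc]
          congr 1
          rw [← Real.rpow_natCast x 2, ← Real.rpow_add hx0]
          norm_num

end LJint

noncomputable def LJf (c d : ℝ) : ℕ → ℝ → ℝ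
  | 0 => fun x => (Real.exp (-(c * x ^ (-12 : ℝ))) - 1) * x ^ 2
  | (j + 1) => fun x =>
      Real.exp (-(c * x ^ (-12 : ℝ))) * (d * x ^ (-6 : ℝ)) ^ (j + 1)
        / ((j + 1).factorial : ℝ) * x ^ 2

section LJfsec

lemma LJf_succ_eq (c d : ℝ) (j : ℕ) {x : ℝ} (hx : 0 < x) :
    LJf c d (j + 1) x = d ^ (j + 1) / ((j + 1).factorial : ℝ)
      * (Real.exp (-(c * x ^ (-12 : ℝ))) * x ^ ((-6 : ℝ) * (j + 1) + 2)) := by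
  show Real.exp (-(c * x ^ (-12 : ℝ))) * (d * x ^ (-6 : ℝ)) ^ (j + 1)
        / ((j + 1).factorial : ℝ) * x ^ 2 = _
  have h1 : (x ^ (-6 : ℝ)) ^ (j + 1) = x ^ ((-6 : ℝ) * (j + 1)) := by
    rw [← Real.rpow_natCast (x ^ (-6 : ℝ)) (j + 1), ← Real.rpow_mul hx.le]
    norm_num
  have h2 : x ^ ((-6 : ℝ) * (j + 1)) * x ^ (2:ℕ) = x ^ ((-6 : ℝ) * (j + 1) + 2) := by
    rw [← Real.rpow_natCast x 2, ← Real.rpow_add hx]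
    norm_num
  rw [mul_pow, h1, ← h2]
  ring

lemma LJf_integral {c d : ℝ} (hc : 0 < c) (hd : 0 < d) (m : ℕ) :
    ∫ x in Ioi (0:ℝ), LJf c d m x
      = (1/12) * d ^ m / (m.factorial : ℝ) * c ^ ((1 - 2 * (m:ℝ)) / 4)
        * Real.Gamma ((2 * (m:ℝ) - 1) / 4) := by
  cases m with
  | zero =>
    have := intB_val hc
    simp only [LJf, Nat.cast_zero, pow_zero, Nat.factorial_zero, Nat.cast_one]
    rw [this]
    norm_num
  | succ j =>
    have he : ((-6 : ℝ) * (j + 1) + 2) < -1 := by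
      have : (0:ℝ) ≤ j := Nat.cast_nonneg j
      nlinarith
    have h1 : ∫ x in Ioi (0:ℝ), LJf c d (j+1) x
        = ∫ x in Ioi (0:ℝ), d ^ (j + 1) / ((j + 1).factorial : ℝ)
            * (Real.exp (-(c * x ^ (-12 : ℝ))) * x ^ ((-6 : ℝ) * (j + 1) + 2)) :=
      setIntegral_congr_fun measurableSet_Ioi fun x hx => LJf_succ_eq c d j hx
    rw [h1, MeasureTheory.integral_const_mul, intA_val hc he]
    have e1 : (((-6 : ℝ) * (j + 1) + 2) + 1) / 12 = (1 - 2 * ((j:ℝ) + 1)) / 4 := by ring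
    have e2 : -((1 - 2 * ((j:ℝ) + 1)) / 4) = (2 * ((j:ℝ) + 1) - 1) / 4 := by ring
    rw [e1, e2]
    push_cast
    ring

lemma LJf_integrableOn {c d : ℝ} (hc : 0 < c) (hd : 0 < d) (m : ℕ) :
    IntegrableOn (LJf c d m) (Ioi 0) := by
  cases m with
  | zero => exact intB_int hc
  | succ j =>
    have he : ((-6 : ℝ) * (j + 1) + 2) < -1 := by
      have : (0:ℝ) ≤ j := Nat.cast_nonneg j
      nlinarith
    refine IntegrableOn.congr_fun ((intA_int hc he).const_mul
      (d ^ (j + 1) / ((j + 1).factorial : ℝ))) (fun x hx => ?_) measurableSet_Ioi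
    exact (LJf_succ_eq c d j hx).symm

lemma LJf_contOn (c d : ℝ) (m : ℕ) : ContinuousOn (LJf c d m) (Ioi 0) := by
  have hE : ContinuousOn (fun x : ℝ => Real.exp (-(c * x ^ (-12 : ℝ)))) (Ioi 0) :=
    Real.continuous_exp.comp_continuousOn ((continuousOn_const.mul (contOn_rpow (-12))).neg)
  cases m with
  | zero => exact (hE.sub continuousOn_const).mul (continuous_pow 2).continuousOn
  | succ j =>
    exact ((hE.mul ((continuousOn_const.mul (contOn_rpow (-6))).pow (j+1))).div_const _).mul
      (continuous_pow 2).continuousOn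

lemma LJf_nonneg {c d : ℝ} (hd : 0 < d) (j : ℕ) {x : ℝ} (hx : 0 < x) :
    0 ≤ LJf c d (j + 1) x := by
  show 0 ≤ Real.exp (-(c * x ^ (-12 : ℝ))) * (d * x ^ (-6 : ℝ)) ^ (j + 1)
        / ((j + 1).factorial : ℝ) * x ^ 2
  have h1 : (0:ℝ) < d * x ^ (-6 : ℝ) := by positivity
  positivity

lemma LJf_nonpos {c d : ℝ} (hc : 0 < c) {x : ℝ} (hx : 0 < x) :
    LJf c d 0 x ≤ 0 := by
  show (Real.exp (-(c * x ^ (-12 : ℝ))) - 1) * x ^ 2 ≤ 0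
  apply mul_nonpos_of_nonpos_of_nonneg _ (sq_nonneg x)
  simp [Real.exp_le_one_iff]
  positivity

lemma LJf_tsum (c d : ℝ) {x : ℝ} (hx : 0 < x) :
    ∑' k, LJf c d k x
      = (Real.exp (-(c * x ^ (-12:ℝ)) + d * x ^ (-6:ℝ)) - 1) * x ^ 2 := by
  set E := Real.exp (-(c * x ^ (-12:ℝ))) with hE
  set y := d * x ^ (-6:ℝ) with hy
  have hsum1 : Summable (fun k : ℕ => y ^ (k+1) / ((k+1).factorial : ℝ)) :=
    (summable_nat_add_iff 1).mpr (Real.summable_pow_div_factorial y)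
  have hs1 : Summable (fun k : ℕ => LJf c d (k+1) x) := by
    apply (hsum1.mul_left (E * x ^ 2)).congr
    intro k
    show (E * x ^ 2) * (y ^ (k+1) / ((k+1).factorial : ℝ)) = LJf c d (k+1) x
    simp only [LJf, ← hE, ← hy]
    ring
  have hsall : Summable (fun k : ℕ => LJf c d k x) := (summable_nat_add_iff 1).mp hs1
  rw [Summable.tsum_eq_zero_add hsall]
  have h2 : ∑' k, LJf c d (k+1) x
      = (E * x ^ 2) * ∑' k : ℕ, y ^ (k+1) / ((k+1).factorial : ℝ) := by
    rw [← tsum_mul_left]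
    refine tsum_congr fun k => ?_
    simp only [LJf, ← hE, ← hy]
    ring
  have h3 : ∑' k : ℕ, y ^ (k+1) / ((k+1).factorial : ℝ) = Real.exp y - 1 := by
    have h4 := Summable.tsum_eq_zero_add (Real.summable_pow_div_factorial y)
    rw [← exp_tsum] at h4
    simp only [pow_zero, Nat.factorial_zero, Nat.cast_one] at h4
    linarith
  rw [h2, h3]
  simp only [LJf, ← hE]
  rw [Real.exp_add, ← hE]
  ring

end LJfsec

section LJsummable

lemma Gamma_conv_bound (j : ℕ) :
    Real.Gamma ((2 * ((j:ℝ) + 2) - 1) / 4) ≤ π ^ ((1:ℝ)/4) * Real.sqrt (j.factorial) := by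
  have hmem1 : (1/2 : ℝ) ∈ Ioi (0:ℝ) := by norm_num
  have hmem2 : ((j:ℝ) + 1) ∈ Ioi (0:ℝ) := by
    have : (0:ℝ) ≤ j := Nat.cast_nonneg j
    simp only [mem_Ioi]; linarith
  have hcx := Real.convexOn_log_Gamma.2 hmem1 hmem2 (by norm_num : (0:ℝ) ≤ 1/2)
    (by norm_num : (0:ℝ) ≤ 1/2) (by norm_num)
  simp only [smul_eq_mul, Function.comp_apply] at hcx
  have hmid : (1/2 : ℝ) * (1/2) + (1/2) * ((j:ℝ) + 1) = (2 * ((j:ℝ) + 2) - 1) / 4 := by ring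
  rw [hmid] at hcx
  have hmidpos : (0:ℝ) < (2 * ((j:ℝ) + 2) - 1) / 4 := by
    have : (0:ℝ) ≤ j := Nat.cast_nonneg j
    linarith
  have hg1 : (0:ℝ) < Real.Gamma (1/2) := Real.Gamma_pos_of_pos (by norm_num)
  have hg2 : (0:ℝ) < Real.Gamma ((j:ℝ) + 1) := Real.Gamma_pos_of_pos (by
    have : (0:ℝ) ≤ j := Nat.cast_nonneg j; linarith)
  have key : Real.Gamma ((2 * ((j:ℝ) + 2) - 1) / 4)
      ≤ Real.Gamma (1/2) ^ ((1:ℝ)/2) * Real.Gamma ((j:ℝ) + 1) ^ ((1:ℝ)/2) := by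
    have h1 := Real.exp_le_exp.2 hcx
    rw [Real.exp_log (Real.Gamma_pos_of_pos hmidpos)] at h1
    rw [Real.exp_add] at h1
    rw [Real.rpow_def_of_pos hg1, Real.rpow_def_of_pos hg2]
    calc Real.Gamma ((2 * ((j:ℝ) + 2) - 1) / 4)
        ≤ Real.exp (1/2 * Real.log (Real.Gamma (1/2)))
          * Real.exp (1/2 * Real.log (Real.Gamma ((j:ℝ) + 1))) := h1
      _ = Real.exp (Real.log (Real.Gamma (1/2)) * (1/2))
          * Real.exp (Real.log (Real.Gamma ((j:ℝ) + 1)) * (1/2)) := by rw [mul_comm (1/2 : ℝ),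
            mul_comm (1/2 : ℝ)]
  have e1 : Real.Gamma (1/2) ^ ((1:ℝ)/2) = π ^ ((1:ℝ)/4) := by
    rw [Real.Gamma_one_half_eq, Real.sqrt_eq_rpow, ← Real.rpow_mul Real.pi_pos.le]
    norm_num
  have e2 : Real.Gamma ((j:ℝ) + 1) ^ ((1:ℝ)/2) = Real.sqrt (j.factorial) := by
    rw [Real.Gamma_nat_eq_factorial, Real.sqrt_eq_rpow]
  rw [e1, e2] at key
  exact key

lemma M_summable {q : ℝ} (hq : 0 < q) :
    Summable (fun m : ℕ => q ^ m / Real.sqrt (m.factorial : ℝ)) := by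
  apply summable_of_ratio_norm_eventually_le (r := 1/2) (by norm_num)
  filter_upwards [eventually_ge_atTop ⌈(2*q)^2⌉₊] with n hn
  have hfn : (0:ℝ) < Real.sqrt (n.factorial : ℝ) := by
    apply Real.sqrt_pos.2
    exact_mod_cast n.factorial_pos
  have hfn1 : (0:ℝ) < Real.sqrt ((n+1).factorial : ℝ) := by
    apply Real.sqrt_pos.2
    exact_mod_cast (n+1).factorial_pos
  have h2q : 2 * q ≤ Real.sqrt ((n:ℝ) + 1) := by
    have h1 : ((2*q)^2 : ℝ) ≤ (n:ℝ) + 1 := by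
      have := Nat.le_ceil ((2*q)^2 : ℝ)
      have h2 : ((⌈(2*q)^2⌉₊ : ℕ) : ℝ) ≤ (n:ℝ) := by exact_mod_cast hn
      linarith
    calc 2*q = Real.sqrt ((2*q)^2) := (Real.sqrt_sq (by positivity)).symm
      _ ≤ Real.sqrt ((n:ℝ) + 1) := Real.sqrt_le_sqrt h1
  have hfact : Real.sqrt (((n+1).factorial : ℕ) : ℝ)
      = Real.sqrt ((n:ℝ) + 1) * Real.sqrt (n.factorial : ℝ) := by
    rw [← Real.sqrt_mul (by positivity)]
    congr 1
    rw [Nat.factorial_succ]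
    push_cast
    ring
  have hsn : (0:ℝ) < Real.sqrt ((n:ℝ) + 1) := by positivity
  rw [Real.norm_eq_abs, Real.norm_eq_abs, abs_of_nonneg (by positivity),
    abs_of_nonneg (by positivity)]
  rw [pow_succ, hfact]
  rw [div_le_iff₀ (by positivity)]
  have hsimp : 1/2 * (q ^ n / Real.sqrt (n.factorial : ℝ))
      * (Real.sqrt ((n:ℝ) + 1) * Real.sqrt (n.factorial : ℝ))
      = q ^ n * Real.sqrt ((n:ℝ) + 1) * (1/2) := by
    field_simp
  rw [hsimp]
  have h3 := mul_le_mul_of_nonneg_left h2q (pow_pos hq n).le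
  calc q ^ n * q = q ^ n * (2 * q) * (1/2) := by ring
    _ ≤ q ^ n * Real.sqrt ((n:ℝ) + 1) * (1/2) :=
        mul_le_mul_of_nonneg_right h3 (by norm_num)

lemma u_summable {b : ℝ} (hb : 0 < b) :
    Summable (fun m : ℕ =>
      Real.Gamma ((2 * (m:ℝ) - 1) / 4) * b ^ ((2 * (m:ℝ) + 1) / 4) / (m.factorial : ℝ)) := by
  set q : ℝ := b ^ ((1:ℝ)/2) with hq_def
  have hq : 0 < q := Real.rpow_pos_of_pos hb _
  set K : ℝ := π ^ ((1:ℝ)/4) * b ^ ((1:ℝ)/4) with hK_def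
  have hmaj : Summable (fun j : ℕ =>
      K * (q ^ (j+2) / Real.sqrt (((j+2).factorial : ℕ) : ℝ))) :=
    ((summable_nat_add_iff 2).mpr (M_summable hq)).mul_left K
  apply (summable_nat_add_iff 2).mp
  apply Summable.of_nonneg_of_le _ _ hmaj
  · intro j
    have h1 : (0:ℝ) ≤ (2 * (((j+2:ℕ)):ℝ) - 1) / 4 := by
      have h0 : (0:ℝ) ≤ j := Nat.cast_nonneg j
      push_cast
      linarith
    apply div_nonneg (mul_nonneg (Real.Gamma_nonneg_of_nonneg h1)
      (Real.rpow_nonneg hb.le _)) (Nat.cast_nonneg _)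
  · intro j
    have hcast : (((j+2:ℕ)):ℝ) = (j:ℝ) + 2 := by push_cast; ring
    have hF : (0:ℝ) < (((j+2).factorial : ℕ) : ℝ) := by exact_mod_cast (j+2).factorial_pos
    have hsF : (0:ℝ) < Real.sqrt (((j+2).factorial : ℕ) : ℝ) := Real.sqrt_pos.2 hF
    have hB : b ^ ((2 * ((j:ℝ)+2) + 1) / 4) = b ^ ((1:ℝ)/4) * q ^ (j+2) := by
      rw [hq_def, ← Real.rpow_natCast (b ^ ((1:ℝ)/2)) (j+2), ← Real.rpow_mul hb.le,
        ← Real.rpow_add hb]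
      congr 1
      push_cast
      ring
    have hff : Real.sqrt ((j.factorial : ℕ) : ℝ) / (((j+2).factorial : ℕ) : ℝ)
        ≤ 1 / Real.sqrt (((j+2).factorial : ℕ) : ℝ) := by
      rw [div_le_div_iff₀ hF hsF]
      have h1 : Real.sqrt ((j.factorial : ℕ) : ℝ) ≤ Real.sqrt (((j+2).factorial : ℕ) : ℝ) := by
        apply Real.sqrt_le_sqrt
        exact_mod_cast Nat.factorial_le (by omega)
      calc Real.sqrt ((j.factorial : ℕ) : ℝ) * Real.sqrt (((j+2).factorial : ℕ) : ℝ)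
          ≤ Real.sqrt (((j+2).factorial : ℕ) : ℝ) * Real.sqrt (((j+2).factorial : ℕ) : ℝ) :=
            mul_le_mul_of_nonneg_right h1 hsF.le
        _ = (((j+2).factorial : ℕ) : ℝ) := Real.mul_self_sqrt hF.le
        _ = 1 * (((j+2).factorial : ℕ) : ℝ) := (one_mul _).symm
    rw [hcast]
    calc Real.Gamma ((2 * ((j:ℝ)+2) - 1) / 4) * b ^ ((2 * ((j:ℝ)+2) + 1) / 4)
          / (((j+2).factorial : ℕ) : ℝ)
        ≤ (π ^ ((1:ℝ)/4) * Real.sqrt (j.factorial)) * b ^ ((2 * ((j:ℝ)+2) + 1) / 4)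
          / (((j+2).factorial : ℕ) : ℝ) := by
          gcongr
          exact Gamma_conv_bound j
      _ = (π ^ ((1:ℝ)/4) * b ^ ((1:ℝ)/4) * q ^ (j+2))
          * (Real.sqrt ((j.factorial : ℕ) : ℝ) / (((j+2).factorial : ℕ) : ℝ)) := by
          rw [hB]; ring
      _ ≤ (π ^ ((1:ℝ)/4) * b ^ ((1:ℝ)/4) * q ^ (j+2))
          * (1 / Real.sqrt (((j+2).factorial : ℕ) : ℝ)) := by
          apply mul_le_mul_of_nonneg_left hff (by positivity)
      _ = K * (q ^ (j+2) / Real.sqrt (((j+2).factorial : ℕ) : ℝ)) := by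
          rw [hK_def]; ring

end LJsummable

section LJterms

lemma u_even_term {T : ℝ} (hT : 0 < T) (j : ℕ) :
    Real.Gamma ((2 * (((2*j : ℕ)):ℝ) - 1) / 4) * (1/T) ^ ((2 * (((2*j : ℕ)):ℝ) + 1) / 4)
        / (((2*j).factorial : ℕ) : ℝ)
      = ((1/T) ^ ((1:ℝ)/4) * Real.Gamma (-(1/4))) *
          ((risingFactorial (-(1/4)) j / risingFactorial (1/2) j) * (1/(4*T)) ^ j
            / (j.factorial : ℝ)) := by
  have hb : (0:ℝ) < 1/T := by positivity
  have hGa : (2 * (((2*j : ℕ)):ℝ) - 1) / 4 = -(1/4) + j := by push_cast; ring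
  have hrp : (1/T) ^ ((2 * (((2*j : ℕ)):ℝ) + 1) / 4)
      = (1/T) ^ ((1:ℝ)/4) * (1/T) ^ j := by
    rw [show (2 * (((2*j : ℕ)):ℝ) + 1) / 4 = (1:ℝ)/4 + (j:ℝ) by push_cast; ring,
      Real.rpow_add hb, Real.rpow_natCast]
  have h4T : ((1:ℝ)/T) ^ j = 4 ^ j * (1/(4*T)) ^ j := by
    rw [← mul_pow]
    congr 1
    field_simp
  rw [hGa, Gamma_rf (-(1/4)) neg_quarter_ne j, hrp, fact_even, h4T]
  have hRF : risingFactorial (1/2) j ≠ 0 := (risingFactorial_pos' (by norm_num) j).ne'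
  have hfj : (j.factorial : ℝ) ≠ 0 := by exact_mod_cast j.factorial_ne_zero
  field_simp

lemma u_odd_term {T : ℝ} (hT : 0 < T) (j : ℕ) :
    Real.Gamma ((2 * (((2*j+1 : ℕ)):ℝ) - 1) / 4) * (1/T) ^ ((2 * (((2*j+1 : ℕ)):ℝ) + 1) / 4)
        / (((2*j+1).factorial : ℕ) : ℝ)
      = ((1/T) ^ ((1:ℝ)/4) * (Real.Gamma (1/4) / Real.sqrt T)) *
          ((risingFactorial (1/4) j / risingFactorial (3/2) j) * (1/(4*T)) ^ j
            / (j.factorial : ℝ)) := by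
  have hb : (0:ℝ) < 1/T := by positivity
  have hsT : (0:ℝ) < Real.sqrt T := Real.sqrt_pos.2 hT
  have hGa : (2 * (((2*j+1 : ℕ)):ℝ) - 1) / 4 = (1/4 : ℝ) + j := by push_cast; ring
  have hrp : (1/T) ^ ((2 * (((2*j+1 : ℕ)):ℝ) + 1) / 4)
      = (1/T) ^ ((1:ℝ)/4) * (1/T) ^ ((1:ℝ)/2) * (1/T) ^ j := by
    rw [show (2 * (((2*j+1 : ℕ)):ℝ) + 1) / 4 = ((1:ℝ)/4 + (1:ℝ)/2) + (j:ℝ) by push_cast; ring,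
      Real.rpow_add hb, Real.rpow_add hb, Real.rpow_natCast]
  have hhalf : ((1:ℝ)/T) ^ ((1:ℝ)/2) = (Real.sqrt T)⁻¹ := by
    rw [one_div, Real.inv_rpow hT.le, ← Real.sqrt_eq_rpow]
  have h4T : ((1:ℝ)/T) ^ j = 4 ^ j * (1/(4*T)) ^ j := by
    rw [← mul_pow]
    congr 1
    field_simp
  rw [hGa, Gamma_rf (1/4) pos_quarter_ne j, hrp, hhalf, fact_odd, h4T]
  have hRF : risingFactorial (3/2) j ≠ 0 := (risingFactorial_pos' (by norm_num) j).ne'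
  have hfj : (j.factorial : ℝ) ≠ 0 := by exact_mod_cast j.factorial_ne_zero
  field_simp

end LJterms

/-- The second virial coefficient for the Lennard-Jones potential (`n = 12`, `m = 6`):
`B(T) = -(πσ³/(6T^{1/4})) [Γ(-1/4) ₁F₁(-1/4;1/2;1/(4T)) + (Γ(1/4)/√T) ₁F₁(1/4;3/2;1/(4T))]`. -/
theorem second_virial_lennard_jones (σ T : ℝ) (hσ : 0 < σ) (hT : 0 < T) :
    -2 * π * ∫ r in Set.Ioi (0 : ℝ),
        (Real.exp (-(1 / T) * ((σ / r) ^ (12 : ℝ) - (σ / r) ^ (6 : ℝ))) - 1) * r ^ 2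
      = -(π * σ ^ 3 / (6 * T ^ ((1 : ℝ) / 4))) *
          (Real.Gamma (-(1 / 4)) * kummer (-(1 / 4)) (1 / 2) (1 / (4 * T)) +
            Real.Gamma (1 / 4) / Real.sqrt T * kummer (1 / 4) (3 / 2) (1 / (4 * T))) := by
  have hb : (0:ℝ) < 1/T := by positivity
  set c : ℝ := σ^12 / T with hc_def
  set d : ℝ := σ^6 / T with hd_def
  have hc : 0 < c := by rw [hc_def]; positivity
  have hd : 0 < d := by rw [hd_def]; positivity
  set u : ℕ → ℝ := fun m =>
    Real.Gamma ((2 * (m:ℝ) - 1) / 4) * (1/T) ^ ((2 * (m:ℝ) + 1) / 4) / (m.factorial : ℝ)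
    with hu_def
  -- value of each term integral
  have hval : ∀ m : ℕ, ∫ x in Ioi (0:ℝ), LJf c d m x = σ^3 / 12 * u m := by
    intro m
    rw [LJf_integral hc hd m, hu_def]
    have e1 : d ^ m = σ ^ ((6*m : ℕ) : ℝ) * (1/T) ^ ((m : ℕ) : ℝ) := by
      rw [hd_def, div_eq_mul_one_div, mul_pow, Real.rpow_natCast, Real.rpow_natCast, pow_mul]
    have e2 : c ^ ((1 - 2*(m:ℝ))/4)
        = σ ^ ((12:ℝ) * ((1 - 2*(m:ℝ))/4)) * (1/T) ^ ((1 - 2*(m:ℝ))/4) := by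
      rw [hc_def, div_eq_mul_one_div, Real.mul_rpow (by positivity) (by positivity),
        ← Real.rpow_natCast σ 12, ← Real.rpow_mul hσ.le]
      norm_num
    have hdc : d ^ m * c ^ ((1 - 2*(m:ℝ))/4) = σ^3 * (1/T) ^ ((2*(m:ℝ)+1)/4) := by
      rw [e1, e2, mul_mul_mul_comm, ← Real.rpow_add hσ, ← Real.rpow_add hb,
        show ((6*m : ℕ) : ℝ) + (12:ℝ) * ((1 - 2*(m:ℝ))/4) = ((3:ℕ) : ℝ) by push_cast; ring,
        show ((m : ℕ) : ℝ) + (1 - 2*(m:ℝ))/4 = (2*(m:ℝ)+1)/4 by push_cast; ring,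
        Real.rpow_natCast]
    calc (1:ℝ)/12 * d ^ m / (m.factorial : ℝ) * c ^ ((1 - 2*(m:ℝ))/4)
          * Real.Gamma ((2*(m:ℝ)-1)/4)
        = (d ^ m * c ^ ((1 - 2*(m:ℝ))/4)) * Real.Gamma ((2*(m:ℝ)-1)/4)
          / (12 * (m.factorial : ℝ)) := by ring
      _ = (σ^3 * (1/T) ^ ((2*(m:ℝ)+1)/4)) * Real.Gamma ((2*(m:ℝ)-1)/4)
          / (12 * (m.factorial : ℝ)) := by rw [hdc]
      _ = σ^3 / 12 * (Real.Gamma ((2*(m:ℝ)-1)/4) * (1/T) ^ ((2*(m:ℝ)+1)/4)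
          / (m.factorial : ℝ)) := by ring
  -- summability
  have hsumu : Summable u := u_summable hb
  -- sign facts for u
  have hu0 : u 0 ≤ 0 := by
    rw [hu_def]
    simp only [Nat.cast_zero, Nat.factorial_zero, Nat.cast_one, div_one]
    rw [show ((2:ℝ)*0 - 1)/4 = -(1/4) by norm_num]
    have h1 : Real.Gamma (-(1/4):ℝ) < 0 := by
      rw [Gamma_neg_quarter]
      have := Real.Gamma_pos_of_pos (show (0:ℝ) < 3/4 by norm_num)
      linarith
    have h2 : (0:ℝ) ≤ (1/T) ^ ((2*(0:ℝ)+1)/4) := Real.rpow_nonneg hb.le _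
    exact mul_nonpos_iff.2 (Or.inr ⟨h1.le, h2⟩)
  have hu1 : ∀ j : ℕ, 0 ≤ u (j+1) := by
    intro j
    rw [hu_def]
    have h1 : (0:ℝ) ≤ (2 * (((j+1:ℕ)):ℝ) - 1) / 4 := by
      have h0 : (0:ℝ) ≤ j := Nat.cast_nonneg j
      push_cast
      linarith
    exact div_nonneg (mul_nonneg (Real.Gamma_nonneg_of_nonneg h1)
      (Real.rpow_nonneg hb.le _)) (Nat.cast_nonneg _)
  -- measurability
  have hmeas : ∀ m : ℕ, AEStronglyMeasurable (LJf c d m) (volume.restrict (Ioi 0)) :=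
    fun m => (LJf_contOn c d m).aestronglyMeasurable measurableSet_Ioi
  -- norms of integrals
  have habs : ∀ m : ℕ, ∫ x in Ioi (0:ℝ), ‖LJf c d m x‖ = σ^3/12 * |u m| := by
    intro m
    cases m with
    | zero =>
      have h1 : ∀ x ∈ Ioi (0:ℝ), ‖LJf c d 0 x‖ = -(LJf c d 0 x) := fun x hx => by
        rw [Real.norm_eq_abs, abs_of_nonpos (LJf_nonpos hc hx)]
      rw [setIntegral_congr_fun measurableSet_Ioi h1, MeasureTheory.integral_neg, hval 0,
        abs_of_nonpos hu0]
      ring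
    | succ j =>
      have h1 : ∀ x ∈ Ioi (0:ℝ), ‖LJf c d (j+1) x‖ = LJf c d (j+1) x := fun x hx => by
        rw [Real.norm_eq_abs, abs_of_nonneg (LJf_nonneg hd j hx)]
      rw [setIntegral_congr_fun measurableSet_Ioi h1, hval (j+1), abs_of_nonneg (hu1 j)]
  -- lintegral values
  have hlint : ∀ m : ℕ, ∫⁻ x in Ioi (0:ℝ), ‖LJf c d m x‖₊ = ENNReal.ofReal (σ^3/12 * |u m|) := by
    intro m
    rw [← habs m, MeasureTheory.ofReal_integral_eq_lintegral_ofReal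
      (LJf_integrableOn hc hd m).norm (ae_of_all _ fun x => norm_nonneg _)]
    simp_rw [ofReal_norm, enorm_eq_nnnorm]
  have hfin : ∑' m, ∫⁻ x in Ioi (0:ℝ), ‖LJf c d m x‖₊ ≠ ⊤ := by
    simp only [hlint]
    rw [← ENNReal.ofReal_tsum_of_nonneg (fun m => by positivity)
      ((summable_abs_iff.mpr hsumu).mul_left _)]
    exact ENNReal.ofReal_ne_top
  have hexch := MeasureTheory.integral_tsum hmeas hfin
  -- pointwise identity
  have hpt : ∀ x ∈ Ioi (0:ℝ),
      (Real.exp (-(1 / T) * ((σ / x) ^ (12 : ℝ) - (σ / x) ^ (6 : ℝ))) - 1) * x ^ 2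
        = ∑' m, LJf c d m x := by
    intro x hx
    have hx0 : (0:ℝ) < x := hx
    rw [LJf_tsum c d hx0]
    have h12 : (σ/x) ^ ((12:ℝ)) = σ^12 * x ^ ((-12:ℝ)) := by
      rw [show ((-12:ℝ)) = -((12:ℕ):ℝ) by norm_num, Real.rpow_neg hx0.le,
        show ((12:ℝ)) = ((12:ℕ):ℝ) by norm_num, Real.div_rpow hσ.le hx0.le,
        Real.rpow_natCast, Real.rpow_natCast, div_eq_mul_inv]
    have h6 : (σ/x) ^ ((6:ℝ)) = σ^6 * x ^ ((-6:ℝ)) := by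
      rw [show ((-6:ℝ)) = -((6:ℕ):ℝ) by norm_num, Real.rpow_neg hx0.le,
        show ((6:ℝ)) = ((6:ℕ):ℝ) by norm_num, Real.div_rpow hσ.le hx0.le,
        Real.rpow_natCast, Real.rpow_natCast, div_eq_mul_inv]
    have harg : -(1 / T) * ((σ / x) ^ (12 : ℝ) - (σ / x) ^ (6 : ℝ))
        = -(c * x ^ (-12:ℝ)) + d * x ^ (-6:ℝ) := by
      rw [h12, h6, hc_def, hd_def]
      ring
    rw [harg]
  rw [setIntegral_congr_fun measurableSet_Ioi hpt, hexch,
    show (∑' m, ∫ x in Ioi (0:ℝ), LJf c d m x) = ∑' m, σ^3/12 * u m from tsum_congr hval,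
    tsum_mul_left]
  -- even/odd split
  have hinj2 : Function.Injective (fun j : ℕ => 2*j) := fun a b h => by
    have : 2*a = 2*b := h
    omega
  have hinj2' : Function.Injective (fun j : ℕ => 2*j+1) := fun a b h => by
    have : 2*a+1 = 2*b+1 := h
    omega
  have he : Summable (fun j : ℕ => u (2*j)) := hsumu.comp_injective hinj2
  have ho : Summable (fun j : ℕ => u (2*j+1)) := hsumu.comp_injective hinj2'
  have hsplit := tsum_even_add_odd he ho
  have hK1 : ∑' j : ℕ, u (2*j) = ((1/T) ^ ((1:ℝ)/4) * Real.Gamma (-(1/4)))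
      * kummer (-(1/4)) (1/2) (1/(4*T)) := by
    rw [kummer, ← tsum_mul_left]
    exact tsum_congr fun j => u_even_term hT j
  have hK2 : ∑' j : ℕ, u (2*j+1) = ((1/T) ^ ((1:ℝ)/4) * (Real.Gamma (1/4) / Real.sqrt T))
      * kummer (1/4) (3/2) (1/(4*T)) := by
    rw [kummer, ← tsum_mul_left]
    exact tsum_congr fun j => u_odd_term hT j
  rw [← hsplit, hK1, hK2]
  have hq : (1/T : ℝ) ^ ((1:ℝ)/4) = (T ^ ((1:ℝ)/4))⁻¹ := by
    rw [one_div, Real.inv_rpow hT.le]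
  rw [hq]
  have hTq : T ^ ((1:ℝ)/4) ≠ 0 := (Real.rpow_pos_of_pos hT _).ne'
  field_simp
  ring
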